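/- For the Goldstein–Kac telegraph process density, the total mass identity holds for all λ>0, c>0, t>0: e^{-λt} + ∫_{-ct}^{ct} (λ e^{-λt}/(2c))[I₀((λ/c)√(c²t²−x²)) + (ct/√(c²t²−x²)) I₁((λ/c)√(c²t²−x²))] dx = 1. -/

import Mathlib

open Real MeasureTheory

lemma hasDeriv_aux (a : ℝ) (k : ℕ) (x : ℝ) :
    HasDerivAt (fun y : ℝ => y * (a^2 - y^2)^(k+1))
      ((2*(k:ℝ)+3) * (a^2-x^2)^(k+1) - 2*((k:ℝ)+1)*a^2*(a^2-x^2)^k) x := by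
  have h1 : HasDerivAt (fun y : ℝ => a^2 - y^2) (-(2*x)) x := by
    simpa using (hasDerivAt_pow 2 x).const_sub (a^2)
  have h2 := h1.pow (k+1)
  have h3 : HasDerivAt (fun y : ℝ => y * (a^2 - y^2)^(k+1))
      (1 * (a^2-x^2)^(k+1) + x * (((k+1:ℕ):ℝ) * (a^2-x^2)^(k+1-1) * -(2*x))) x :=
    (hasDerivAt_id x).mul h2
  convert h3 using 1
  simp only [Nat.add_sub_cancel, id_eq]
  push_cast
  ring

lemma J_rec (a : ℝ) (k : ℕ) :
    (2*(k:ℝ)+3) * ∫ x in (-a)..a, (a^2-x^2)^(k+1)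
      = 2*((k:ℝ)+1)*a^2 * ∫ x in (-a)..a, (a^2-x^2)^k := by
  have key : ∫ x in (-a)..a,
      ((2*(k:ℝ)+3) * (a^2-x^2)^(k+1) - 2*((k:ℝ)+1)*a^2*(a^2-x^2)^k)
      = (a * (a^2-a^2)^(k+1)) - ((-a) * (a^2-(-a)^2)^(k+1)) := by
    apply intervalIntegral.integral_eq_sub_of_hasDerivAt
      (f := fun y : ℝ => y * (a^2 - y^2)^(k+1))
    · intro x _; exact hasDeriv_aux a k x
    · apply Continuous.intervalIntegrable; continuity
  rw [intervalIntegral.integral_sub ((by continuity : Continuous fun x : ℝ => (2*(k:ℝ)+3) * (a^2-x^2)^(k+1)).intervalIntegrable _ _) ((by continuity : Continuous fun x : ℝ => 2*((k:ℝ)+1)*a^2*(a^2-x^2)^k).intervalIntegrable _ _),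
    intervalIntegral.integral_const_mul, intervalIntegral.integral_const_mul] at key
  have e1 : (a:ℝ)^2 - a^2 = 0 := by ring
  have e2 : (a:ℝ)^2 - (-a)^2 = 0 := by ring
  rw [e1, e2, zero_pow (Nat.succ_ne_zero k), mul_zero, mul_zero, sub_zero] at key
  linarith

lemma J_val (a : ℝ) (k : ℕ) :
    ∫ x in (-a)..a, (a^2-x^2)^k
      = 2 * a^(2*k+1) * 4^k * ((k.factorial:ℝ))^2 / ((2*k+1).factorial : ℝ) := by
  induction k with
  | zero => simp; ring
  | succ k ih =>
    have hrec := J_rec a k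
    rw [ih] at hrec
    have h3 : (2*(k:ℝ)+3) ≠ 0 := by positivity
    have hf1 : ((2*k+1).factorial : ℝ) ≠ 0 := Nat.cast_ne_zero.2 (Nat.factorial_ne_zero _)
    have hf2 : ((k.factorial : ℝ)) ≠ 0 := Nat.cast_ne_zero.2 (Nat.factorial_ne_zero _)
    have hfac : ((2*(k+1)+1).factorial : ℝ)
        = (2*(k:ℝ)+3) * (2*(k:ℝ)+2) * ((2*k+1).factorial : ℝ) := by
      have h : 2*(k+1)+1 = (2*k+1) + 1 + 1 := by ring
      rw [h, Nat.factorial_succ, Nat.factorial_succ]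
      push_cast; ring
    have hfac2 : (((k+1).factorial : ℝ)) = ((k:ℝ)+1) * (k.factorial : ℝ) := by
      rw [Nat.factorial_succ]; push_cast; ring
    have hJ : ∫ x in (-a)..a, (a^2-x^2)^(k+1)
        = 2*((k:ℝ)+1)*a^2 * (2 * a^(2*k+1) * 4^k * ((k.factorial:ℝ))^2 / ((2*k+1).factorial : ℝ)) / (2*(k:ℝ)+3) := by
      rw [eq_div_iff h3]; linarith
    rw [hJ, hfac, hfac2]
    field_simp
    ring

noncomputable def besselI0 (z : ℝ) : ℝ := ∑' k : ℕ, (z / 2) ^ (2 * k) / ((k.factorial : ℝ)) ^ 2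

noncomputable def besselI1 (z : ℝ) : ℝ :=
  ∑' k : ℕ, (z / 2) ^ (2 * k + 1) / ((k.factorial : ℝ) * ((k + 1).factorial : ℝ))

lemma fact_one_le (k : ℕ) : (1:ℝ) ≤ (k.factorial : ℝ) := by
  exact_mod_cast Nat.one_le_iff_ne_zero.2 (Nat.factorial_ne_zero k)

lemma summA (z : ℝ) (hz : 0 ≤ z) : Summable (fun k : ℕ => z^(2*k) / ((k.factorial:ℝ))^2) := by
  have h := Real.summable_pow_div_factorial (z^2)
  apply Summable.of_nonneg_of_le (fun k => by positivity) (fun k => ?_) h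
  rw [pow_mul]
  have h1 := fact_one_le k
  have h2 : (k.factorial : ℝ) ≤ ((k.factorial:ℝ))^2 := le_self_pow₀ h1 two_ne_zero
  gcongr

lemma summB (z w : ℝ) (hz : 0 ≤ z) (hw : 0 ≤ w) :
    Summable (fun k : ℕ => w * z^(2*k) / ((k.factorial:ℝ) * (((k+1).factorial:ℝ)))) := by
  have h := (Real.summable_pow_div_factorial (z^2)).mul_left w
  apply Summable.of_nonneg_of_le (fun k => by positivity) (fun k => ?_) h
  rw [pow_mul]
  have h1 := fact_one_le k
  have h1' := fact_one_le (k+1)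
  have h2 : (k.factorial : ℝ) ≤ (k.factorial:ℝ) * ((k+1).factorial:ℝ) := by nlinarith
  calc w * (z^2)^k / ((k.factorial:ℝ) * ((k+1).factorial:ℝ))
      ≤ w * (z^2)^k / (k.factorial:ℝ) := by
        gcongr
    _ = w * ((z^2)^k / (k.factorial:ℝ)) := by ring

lemma bessel_sum (b aa s : ℝ) (hb : 0 ≤ b) (hs : 0 < s) (haa : 0 ≤ aa) :
    besselI0 (b * Real.sqrt s) + (aa / Real.sqrt s) * besselI1 (b * Real.sqrt s)
      = ∑' k : ℕ, ((b/2)^(2*k) * s^k / ((k.factorial:ℝ))^2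
          + aa * (b/2)^(2*k+1) * s^k / ((k.factorial:ℝ) * ((k+1).factorial:ℝ))) := by
  have hsq : Real.sqrt s ^ 2 = s := Real.sq_sqrt hs.le
  have hsp : 0 < Real.sqrt s := Real.sqrt_pos.2 hs
  have hzkey : ∀ k : ℕ, ((b/2) * Real.sqrt s)^(2*k) = (b/2)^(2*k) * s^k := by
    intro k
    rw [mul_pow, pow_mul (Real.sqrt s), hsq]
  have heven : ∀ k : ℕ, ((b * Real.sqrt s)/2)^(2*k) = (b/2)^(2*k) * s^k := by
    intro k
    rw [show (b * Real.sqrt s)/2 = (b/2) * Real.sqrt s by ring, hzkey]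
  have hodd : ∀ k : ℕ, ((b * Real.sqrt s)/2)^(2*k+1)
      = (b/2)^(2*k+1) * s^k * Real.sqrt s := by
    intro k
    rw [show (b * Real.sqrt s)/2 = (b/2) * Real.sqrt s by ring, mul_pow,
      pow_succ (Real.sqrt s), pow_mul (Real.sqrt s), hsq]
    ring
  have hI0 : besselI0 (b * Real.sqrt s) = ∑' k : ℕ, (b/2)^(2*k) * s^k / ((k.factorial:ℝ))^2 := by
    unfold besselI0
    exact tsum_congr fun k => by rw [heven k]
  have hI1 : (aa / Real.sqrt s) * besselI1 (b * Real.sqrt s)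
      = ∑' k : ℕ, aa * (b/2)^(2*k+1) * s^k / ((k.factorial:ℝ) * ((k+1).factorial:ℝ)) := by
    unfold besselI1
    rw [← tsum_mul_left]
    refine tsum_congr fun k => ?_
    rw [hodd k]
    field_simp
  rw [hI0, hI1]
  have hz : (0:ℝ) ≤ (b/2) * Real.sqrt s := by positivity
  refine (Summable.tsum_add ?_ ?_).symm
  · exact Summable.congr (summA ((b/2) * Real.sqrt s) hz) (fun k => by rw [hzkey k])
  · exact Summable.congr (summB ((b/2) * Real.sqrt s) (aa * (b/2)) hz (by positivity))
      (fun k => by rw [hzkey k, pow_succ (b/2)]; ring)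

set_option maxHeartbeats 1000000 in
lemma term_val (a b C : ℝ) (hb : b ≠ 0) (k : ℕ) :
    (C*((b/2)^(2*k)/((k.factorial:ℝ))^2 + a*(b/2)^(2*k+1)/((k.factorial:ℝ)*(((k+1).factorial:ℝ)))))
      * (2 * a^(2*k+1) * 4^k * ((k.factorial:ℝ))^2 / ((2*k+1).factorial:ℝ))
    = (2*C/b) * ((a*b)^(2*k+1)/((2*k+1).factorial:ℝ) + (a*b)^(2*k+2)/((2*k+2).factorial:ℝ)) := by
  have h4 : (4:ℝ)^k = 2^(2*k) := by rw [pow_mul]; norm_num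
  have hfe : ((2*k+2).factorial:ℝ) = (2*(k:ℝ)+2) * ((2*k+1).factorial:ℝ) := by
    have h : 2*k+2 = (2*k+1)+1 := by ring
    rw [h, Nat.factorial_succ]; push_cast; ring
  have hf2 : (((k+1).factorial:ℝ)) = ((k:ℝ)+1)*(k.factorial:ℝ) := by
    rw [Nat.factorial_succ]; push_cast; ring
  have hn1 : ((2*k+1).factorial:ℝ) ≠ 0 := Nat.cast_ne_zero.2 (Nat.factorial_ne_zero _)
  have hn2 : ((k.factorial:ℝ)) ≠ 0 := Nat.cast_ne_zero.2 (Nat.factorial_ne_zero _)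
  have hn3 : (2*(k:ℝ)+2) ≠ 0 := by positivity
  have hn4 : ((k:ℝ)+1) ≠ 0 := by positivity
  have hn5 : ((2:ℝ))^(2*k) ≠ 0 := by positivity
  rw [hfe, hf2, h4, div_pow, div_pow, mul_pow a b, mul_pow a b]
  field_simp
  ring

set_option maxHeartbeats 1000000 in
lemma sum_exp_aux (x : ℝ) :
    ∑' k : ℕ, (x^(2*k+1)/((2*k+1).factorial:ℝ) + x^(2*k+2)/((2*k+2).factorial:ℝ))
      = Real.exp x - 1 := by
  have hu : Summable (fun n : ℕ => x^n/(n.factorial:ℝ)) := Real.summable_pow_div_factorial x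
  have he : Summable (fun k : ℕ => x^(2*k)/((2*k).factorial:ℝ)) :=
    hu.comp_injective (i := fun k : ℕ => 2*k) (fun i j h => by dsimp only at h; omega)
  have ho : Summable (fun k : ℕ => x^(2*k+1)/((2*k+1).factorial:ℝ)) :=
    hu.comp_injective (i := fun k : ℕ => 2*k+1) (fun i j h => by dsimp only at h; omega)
  have he2 : Summable (fun k : ℕ => x^(2*k+2)/((2*k+2).factorial:ℝ)) :=
    hu.comp_injective (i := fun k : ℕ => 2*k+2) (fun i j h => by dsimp only at h; omega)
  have hexp : ∑' n : ℕ, x^n/(n.factorial:ℝ) = Real.exp x := by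
    rw [Real.exp_eq_exp_ℝ, NormedSpace.exp_eq_tsum_div]
  have heo : (∑' k : ℕ, x^(2*k)/((2*k).factorial:ℝ)) + (∑' k : ℕ, x^(2*k+1)/((2*k+1).factorial:ℝ))
      = ∑' n : ℕ, x^n/(n.factorial:ℝ) :=
    tsum_even_add_odd (f := fun n : ℕ => x^n/(n.factorial:ℝ)) he ho
  have hshift : (∑' k : ℕ, x^(2*k)/((2*k).factorial:ℝ))
      = 1 + ∑' k : ℕ, x^(2*(k+1))/((2*(k+1)).factorial:ℝ) := by
    have := Summable.tsum_eq_zero_add he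
    simpa using this
  have hcongr : (∑' k : ℕ, x^(2*(k+1))/((2*(k+1)).factorial:ℝ))
      = ∑' k : ℕ, x^(2*k+2)/((2*k+2).factorial:ℝ) :=
    tsum_congr fun k => by norm_num [Nat.mul_add]
  rw [Summable.tsum_add ho he2]
  rw [hcongr] at hshift
  rw [hexp] at heo
  linarith

set_option maxHeartbeats 1000000 in
lemma main_integral (a b C : ℝ) (ha : 0 < a) (hb : 0 < b) (hC : 0 < C) :
    (∫ x in Set.Ioo (-a) a,
      C * (besselI0 (b * Real.sqrt (a^2 - x^2)) +
        (a / Real.sqrt (a^2 - x^2)) * besselI1 (b * Real.sqrt (a^2 - x^2))))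
      = (2*C/b) * (Real.exp (a*b) - 1) := by
  set e : ℕ → ℝ := fun k =>
    C*((b/2)^(2*k)/((k.factorial:ℝ))^2
      + a*(b/2)^(2*k+1)/((k.factorial:ℝ)*(((k+1).factorial:ℝ)))) with he_def
  have he_nonneg : ∀ k, 0 ≤ e k := by
    intro k
    have : (0:ℝ) < b/2 := by positivity
    rw [he_def]
    positivity
  have hsub : ∀ x ∈ Set.Ioo (-a) a, 0 < a^2 - x^2 := by
    rintro x ⟨h1, h2⟩
    nlinarith
  -- pointwise identity
  have hcongr : Set.EqOn
      (fun x => C * (besselI0 (b * Real.sqrt (a^2 - x^2)) +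
        (a / Real.sqrt (a^2 - x^2)) * besselI1 (b * Real.sqrt (a^2 - x^2))))
      (fun x => ∑' k : ℕ, e k * (a^2 - x^2)^k) (Set.Ioo (-a) a) := by
    intro x hx
    simp only
    rw [bessel_sum b a (a^2 - x^2) hb.le (hsub x hx) ha.le, ← tsum_mul_left]
    exact tsum_congr fun k => by rw [he_def]; ring
  rw [setIntegral_congr_fun measurableSet_Ioo hcongr]
  -- integrability of each term
  have hint : ∀ k : ℕ, IntegrableOn (fun x => e k * (a^2 - x^2)^k) (Set.Ioo (-a) a) := by
    intro k
    rw [← intervalIntegrable_iff_integrableOn_Ioo_of_le (by linarith : -a ≤ a)]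
    exact (by continuity : Continuous fun x : ℝ => e k * (a^2 - x^2)^k).intervalIntegrable _ _
  -- value of each integral
  have hval : ∀ k : ℕ, (∫ x in Set.Ioo (-a) a, e k * (a^2 - x^2)^k)
      = (2*C/b) * ((a*b)^(2*k+1)/((2*k+1).factorial:ℝ)
          + (a*b)^(2*k+2)/((2*k+2).factorial:ℝ)) := by
    intro k
    rw [← integral_Ioc_eq_integral_Ioo,
      ← intervalIntegral.integral_of_le (by linarith : -a ≤ a),
      intervalIntegral.integral_const_mul, J_val, he_def]
    exact term_val a b C hb.ne' k
  -- summability of the series of norms of integrals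
  have hx := Real.summable_pow_div_factorial (a*b)
  have ho : Summable (fun k : ℕ => (a*b)^(2*k+1)/((2*k+1).factorial:ℝ)) :=
    hx.comp_injective (i := fun k : ℕ => 2*k+1) (fun i j h => by dsimp only at h; omega)
  have he2 : Summable (fun k : ℕ => (a*b)^(2*k+2)/((2*k+2).factorial:ℝ)) :=
    hx.comp_injective (i := fun k : ℕ => 2*k+2) (fun i j h => by dsimp only at h; omega)
  have hvsumm : Summable (fun k : ℕ => (2*C/b) * ((a*b)^(2*k+1)/((2*k+1).factorial:ℝ)
      + (a*b)^(2*k+2)/((2*k+2).factorial:ℝ))) := (ho.add he2).mul_left _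
  have hnormsumm : Summable (fun k : ℕ => ∫ x in Set.Ioo (-a) a, ‖e k * (a^2 - x^2)^k‖) := by
    refine hvsumm.congr fun k => ?_
    rw [← hval k]
    refine setIntegral_congr_fun measurableSet_Ioo fun x hx' => ?_
    exact (norm_of_nonneg (mul_nonneg (he_nonneg k) (pow_nonneg (hsub x hx').le k))).symm
  rw [← MeasureTheory.integral_tsum_of_summable_integral_norm hint hnormsumm]
  calc (∑' k : ℕ, ∫ x in Set.Ioo (-a) a, e k * (a^2 - x^2)^k)
      = ∑' k : ℕ, (2*C/b) * ((a*b)^(2*k+1)/((2*k+1).factorial:ℝ)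
          + (a*b)^(2*k+2)/((2*k+2).factorial:ℝ)) := tsum_congr hval
    _ = (2*C/b) * ∑' k : ℕ, ((a*b)^(2*k+1)/((2*k+1).factorial:ℝ)
          + (a*b)^(2*k+2)/((2*k+2).factorial:ℝ)) := tsum_mul_left
    _ = (2*C/b) * (Real.exp (a*b) - 1) := by rw [sum_exp_aux (a*b)]

theorem telegraph_total_mass (lam c t : ℝ) (hlam : 0 < lam) (hc : 0 < c) (ht : 0 < t) :
    Real.exp (-(lam * t)) +
      (∫ x in Set.Ioo (-(c * t)) (c * t),
        (lam * Real.exp (-(lam * t)) / (2 * c)) *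
          (besselI0 ((lam / c) * Real.sqrt ((c * t) ^ 2 - x ^ 2)) +
            ((c * t) / Real.sqrt ((c * t) ^ 2 - x ^ 2)) *
              besselI1 ((lam / c) * Real.sqrt ((c * t) ^ 2 - x ^ 2)))) = 1 := by
  have ha : 0 < c * t := by positivity
  have hb : 0 < lam / c := by positivity
  have hC : 0 < lam * Real.exp (-(lam * t)) / (2 * c) := by positivity
  have h := main_integral (c * t) (lam / c) (lam * Real.exp (-(lam * t)) / (2 * c)) ha hb hC
  rw [h]
  have hab : (c * t) * (lam / c) = lam * t := by field_simp
  rw [hab]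
  have hcoef : 2 * (lam * Real.exp (-(lam * t)) / (2 * c)) / (lam / c)
      = Real.exp (-(lam * t)) := by
    field_simp
  rw [hcoef, Real.exp_neg]
  have := Real.exp_pos (lam * t)
  field_simp
  ring
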